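/- Let X be an L-embedded Banach space with X'' = X ⊕₁ X_s. Define C₀ as the class of bounded sequences (x_n) in X each of whose subsequences admits a further subsequence that spans l^1 asymptotically isometrically or converges to 0 in norm, and C = {(x_n) : ∃ x ∈ X with (x_n − x) ∈ C₀}. Then the limit x in the definition of C is unique; i.e., if (x_n − x) ∈ C₀ and (x_n − y) ∈ C₀ then x = y. -/

import Mathlib

open Filter Topology
noncomputable section
/-- A sequence `x` of nonzero elements spans `ℓ¹` asymptotically isometrically. -/
def SpansL1Asy {X : Type*} [NormedAddCommGroup X] [NormedSpace ℝ X] (x : ℕ → X) : Prop :=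
  ∃ δ : ℕ → ℝ, (∀ n, δ n ∈ Set.Ico (0 : ℝ) 1) ∧ Tendsto δ atTop (𝓝 0) ∧
    ∀ (m : ℕ) (α : ℕ → ℝ),
      (∑ n ∈ Finset.range m, (1 - δ n) * |α n|) ≤
          ‖∑ n ∈ Finset.range m, α n • (‖x n‖⁻¹ • x n)‖ ∧
        ‖∑ n ∈ Finset.range m, α n • (‖x n‖⁻¹ • x n)‖ ≤ ∑ n ∈ Finset.range m, |α n|
/-- Membership in the class C₀ of the construction of the abstract measure topology:
bounded, and every subsequence has a further subsequence spanning ℓ¹ asymptotically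
isometrically or converging to 0 in norm. -/
def InC0 {X : Type*} [NormedAddCommGroup X] [NormedSpace ℝ X] (s : ℕ → X) : Prop :=
  (∃ M, ∀ n, ‖s n‖ ≤ M) ∧
    ∀ φ : ℕ → ℕ, StrictMono φ → ∃ ψ : ℕ → ℕ, StrictMono ψ ∧
      (SpansL1Asy (s ∘ φ ∘ ψ) ∨ Tendsto (fun n => ‖s (φ (ψ n))‖) atTop (𝓝 0))

section AuxiliaryLemmas

variable {X : Type*} [NormedAddCommGroup X] [NormedSpace ℝ X]

private lemma exists_rlim (g : ℕ → ℝ) (M : ℝ) (hg : ∀ n, |g n| ≤ M) :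
    ∃ L, |L| ≤ M ∧ Tendsto g ↑(Filter.hyperfilter ℕ) (𝓝 L) := by
  have hmem : Set.Icc (-M) M ∈ Ultrafilter.map g (Filter.hyperfilter ℕ) := by
    refine Filter.mem_map.mpr (Filter.univ_mem' ?_)
    intro n
    exact Set.mem_Icc.mpr (abs_le.mp (hg n))
  obtain ⟨L, hL, hle⟩ := isCompact_Icc.ultrafilter_le_nhds
    (Ultrafilter.map g (Filter.hyperfilter ℕ)) (Filter.le_principal_iff.mpr hmem)
  refine ⟨L, abs_le.mpr ⟨(Set.mem_Icc.mp hL).1, (Set.mem_Icc.mp hL).2⟩, ?_⟩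
  rw [Ultrafilter.coe_map] at hle
  exact hle

private lemma exists_dlim (c : ℕ → X) (M : ℝ) (hc : ∀ n, ‖c n‖ ≤ M) :
    ∃ z : StrongDual ℝ (StrongDual ℝ X),
      ∀ f : StrongDual ℝ X,
        Tendsto (fun n => f (c n)) ↑(Filter.hyperfilter ℕ) (𝓝 (z f)) := by
  have h : ∀ f : StrongDual ℝ X, ∃ L, |L| ≤ M * ‖f‖ ∧
      Tendsto (fun n => f (c n)) ↑(Filter.hyperfilter ℕ) (𝓝 L) := by
    intro f
    refine exists_rlim _ _ (fun n => ?_)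
    rw [← Real.norm_eq_abs]
    calc ‖f (c n)‖ ≤ ‖f‖ * ‖c n‖ := f.le_opNorm _
      _ ≤ ‖f‖ * M := mul_le_mul_of_nonneg_left (hc n) (norm_nonneg f)
      _ = M * ‖f‖ := mul_comm _ _
  choose L hLb hLt using h
  have hadd : ∀ f g : StrongDual ℝ X, L (f + g) = L f + L g := by
    intro f g
    refine tendsto_nhds_unique (hLt (f + g)) ?_
    simpa [ContinuousLinearMap.add_apply] using (hLt f).add (hLt g)
  have hsmul : ∀ (r : ℝ) (f : StrongDual ℝ X), L (r • f) = r * L f := by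
    intro r f
    refine tendsto_nhds_unique (hLt (r • f)) ?_
    simpa [ContinuousLinearMap.smul_apply] using (hLt f).const_mul r
  let Z : StrongDual ℝ X →ₗ[ℝ] ℝ :=
    { toFun := L, map_add' := hadd, map_smul' := hsmul }
  refine ⟨Z.mkContinuous M (fun f => ?_), fun f => hLt f⟩
  simpa [Real.norm_eq_abs, Z] using hLb f

private lemma sum_ext {Y : Type*} [AddCommMonoid Y] (c : ℕ → ℝ) (m M' : ℕ) (h : m ≤ M')
    (hc : ∀ n, m ≤ n → c n = 0) (F : ℕ → ℝ → Y) (hF0 : ∀ n, F n 0 = 0) :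
    ∑ n ∈ Finset.range M', F n (c n) = ∑ n ∈ Finset.range m, F n (c n) :=
  (Finset.sum_subset (Finset.range_subset_range.mpr h) (fun n _ hn => by
      rw [hc n (le_of_not_gt (fun hlt => hn (Finset.mem_range.mpr hlt))), hF0])).symm


private lemma sum_reindex' {Y : Type*} [AddCommMonoid Y] {ψ : ℕ → ℕ} (hψ : StrictMono ψ)
    (m : ℕ) (α : ℕ → ℝ) (F : ℕ → ℝ → Y) (hF0 : ∀ n, F n 0 = 0) :
    ∑ n ∈ Finset.range (ψ m), F n (∑ k ∈ (Finset.range m).filter (fun k => ψ k = n), α k) =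
      ∑ k ∈ Finset.range m, F (ψ k) (α k) := by
  classical
  have himg : (Finset.range m).image ψ ⊆ Finset.range (ψ m) := by
    intro n hn
    obtain ⟨k, hk, rfl⟩ := Finset.mem_image.mp hn
    exact Finset.mem_range.mpr (hψ (Finset.mem_range.mp hk))
  have h1 : ∑ n ∈ Finset.range (ψ m),
        F n (∑ k ∈ (Finset.range m).filter (fun k => ψ k = n), α k) =
      ∑ n ∈ (Finset.range m).image ψ,
        F n (∑ k ∈ (Finset.range m).filter (fun k => ψ k = n), α k) := by
    refine (Finset.sum_subset himg (fun n _ hn => ?_)).symm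
    have hempty : (Finset.range m).filter (fun k => ψ k = n) = ∅ := by
      refine Finset.filter_eq_empty_iff.mpr (fun k hk hkn => ?_)
      exact hn (Finset.mem_image.mpr ⟨k, hk, hkn⟩)
    rw [hempty, Finset.sum_empty, hF0]
  rw [h1, Finset.sum_image (fun a _ b _ hab => hψ.injective hab)]
  refine Finset.sum_congr rfl (fun k hk => ?_)
  have hfil : (Finset.range m).filter (fun j => ψ j = ψ k) = {k} := by
    refine Finset.ext (fun j => ?_)
    simp only [Finset.mem_filter, Finset.mem_singleton, Finset.mem_range]
    constructor
    · rintro ⟨_, hj⟩; exact hψ.injective hj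
    · rintro rfl; exact ⟨Finset.mem_range.mp hk, rfl⟩
  rw [hfil, Finset.sum_singleton]

private lemma spansL1Asy_comp {u : ℕ → X} (hu : SpansL1Asy u) {ψ : ℕ → ℕ}
    (hψ : StrictMono ψ) : SpansL1Asy (u ∘ ψ) := by
  classical
  obtain ⟨δ, hδ1, hδ2, hδ3⟩ := hu
  refine ⟨δ ∘ ψ, fun n => hδ1 (ψ n), hδ2.comp hψ.tendsto_atTop, fun m α => ?_⟩
  set β : ℕ → ℝ := fun n => ∑ k ∈ (Finset.range m).filter (fun k => ψ k = n), α k with hβ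
  have e1 : ∑ n ∈ Finset.range (ψ m), (1 - δ n) * |β n| =
      ∑ k ∈ Finset.range m, (1 - δ (ψ k)) * |α k| :=
    sum_reindex' hψ m α (fun n a => (1 - δ n) * |a|) (by simp)
  have e2 : ∑ n ∈ Finset.range (ψ m), β n • (‖u n‖⁻¹ • u n) =
      ∑ k ∈ Finset.range m, α k • (‖u (ψ k)‖⁻¹ • u (ψ k)) :=
    sum_reindex' hψ m α (fun n a => a • (‖u n‖⁻¹ • u n)) (by simp)
  have e3 : ∑ n ∈ Finset.range (ψ m), |β n| = ∑ k ∈ Finset.range m, |α k| :=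
    sum_reindex' hψ m α (fun n a => |a|) (by simp)
  obtain ⟨h1, h2⟩ := hδ3 (ψ m) β
  constructor
  · simp only [Function.comp_apply]
    rw [← e1, ← e2]
    exact h1
  · simp only [Function.comp_apply]
    rw [← e2, ← e3]
    exact h2

private lemma genHB (w : ℕ → X) (δ : ℕ → ℝ) (x : X) (t : ℝ) (N : ℕ)
    (H : ∀ (m : ℕ) (α : ℕ → ℝ) (s : ℝ), (∀ n, n < N ∨ m ≤ n → α n = 0) →
      -‖s • x + ∑ n ∈ Finset.range m, α n • w n‖ ≤
        (∑ n ∈ Finset.range m, α n * (1 - δ n)) + s * t) :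
    ∃ f : StrongDual ℝ X, ‖f‖ ≤ 1 ∧ (∀ n, N ≤ n → f (w n) = 1 - δ n) ∧ f x = t := by
  classical
  set S : X → Set ℝ := fun v => { e | ∃ m : ℕ, ∃ α : ℕ → ℝ, ∃ s : ℝ,
    (∀ n, n < N ∨ m ≤ n → α n = 0) ∧
    e = ‖v - (s • x + ∑ n ∈ Finset.range m, α n • w n)‖ +
        ((∑ n ∈ Finset.range m, α n * (1 - δ n)) + s * t) } with hS
  have hmem0 : ∀ v : X, ‖v‖ ∈ S v := fun v => ⟨0, 0, 0, by simp, by simp⟩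
  have hlbd : ∀ v : X, ∀ e ∈ S v, -‖v‖ ≤ e := by
    rintro v e ⟨m, α, s, hsupp, rfl⟩
    have h1 := H m α s hsupp
    set V := s • x + ∑ n ∈ Finset.range m, α n • w n with hV
    have h2 : ‖V‖ - ‖v‖ ≤ ‖v - V‖ := by
      have := norm_sub_norm_le V v
      rw [norm_sub_rev V v] at this
      linarith
    linarith
  have hBdd : ∀ v : X, BddBelow (S v) := fun v => ⟨-‖v‖, fun e he => hlbd v e he⟩
  have hSne : ∀ v : X, (S v).Nonempty := fun v => ⟨‖v‖, hmem0 v⟩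
  set q : X → ℝ := fun v => sInf (S v) with hq
  have hq_le : ∀ v : X, ∀ e ∈ S v, q v ≤ e := fun v e he => csInf_le (hBdd v) he
  have hq_norm : ∀ v, q v ≤ ‖v‖ := fun v => hq_le v _ (hmem0 v)
  have hq_lb : ∀ v, -‖v‖ ≤ q v := fun v => le_csInf (hSne v) (hlbd v)
  -- subadditivity
  have hq_add : ∀ v₁ v₂, q (v₁ + v₂) ≤ q v₁ + q v₂ := by
    intro v₁ v₂
    have key : ∀ e₁ ∈ S v₁, ∀ e₂ ∈ S v₂, q (v₁ + v₂) ≤ e₁ + e₂ := by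
      rintro e₁ ⟨m₁, α₁, s₁, hs₁, rfl⟩ e₂ ⟨m₂, α₂, s₂, hs₂, rfl⟩
      set Mx := max m₁ m₂ with hMx
      have hA1 : ∀ n, m₁ ≤ n → α₁ n = 0 := fun n hn => hs₁ n (Or.inr hn)
      have hA2 : ∀ n, m₂ ≤ n → α₂ n = 0 := fun n hn => hs₂ n (Or.inr hn)
      have hsupp : ∀ n, n < N ∨ Mx ≤ n → α₁ n + α₂ n = 0 := by
        rintro n (hn | hn)
        · rw [hs₁ n (Or.inl hn), hs₂ n (Or.inl hn), add_zero]
        · rw [hA1 n (le_trans (le_max_left _ _) hn), hA2 n (le_trans (le_max_right _ _) hn),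
            add_zero]
      have hmem : ‖(v₁ + v₂) - ((s₁ + s₂) • x + ∑ n ∈ Finset.range Mx, (α₁ n + α₂ n) • w n)‖ +
          ((∑ n ∈ Finset.range Mx, (α₁ n + α₂ n) * (1 - δ n)) + (s₁ + s₂) * t) ∈ S (v₁ + v₂) :=
        ⟨Mx, fun n => α₁ n + α₂ n, s₁ + s₂, hsupp, rfl⟩
      refine (hq_le _ _ hmem).trans ?_
      have e₁s : ∑ n ∈ Finset.range Mx, α₁ n • w n = ∑ n ∈ Finset.range m₁, α₁ n • w n :=
        sum_ext α₁ m₁ Mx (le_max_left _ _) hA1 (fun n a => a • w n) (by simp)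
      have e₂s : ∑ n ∈ Finset.range Mx, α₂ n • w n = ∑ n ∈ Finset.range m₂, α₂ n • w n :=
        sum_ext α₂ m₂ Mx (le_max_right _ _) hA2 (fun n a => a • w n) (by simp)
      have e₁t : ∑ n ∈ Finset.range Mx, α₁ n * (1 - δ n) =
          ∑ n ∈ Finset.range m₁, α₁ n * (1 - δ n) :=
        sum_ext α₁ m₁ Mx (le_max_left _ _) hA1 (fun n a => a * (1 - δ n)) (by simp)
      have e₂t : ∑ n ∈ Finset.range Mx, α₂ n * (1 - δ n) =
          ∑ n ∈ Finset.range m₂, α₂ n * (1 - δ n) :=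
        sum_ext α₂ m₂ Mx (le_max_right _ _) hA2 (fun n a => a * (1 - δ n)) (by simp)
      have hns : ∑ n ∈ Finset.range Mx, (α₁ n + α₂ n) • w n =
          (∑ n ∈ Finset.range m₁, α₁ n • w n) + ∑ n ∈ Finset.range m₂, α₂ n • w n := by
        simp only [add_smul, Finset.sum_add_distrib]
        rw [e₁s, e₂s]
      have hnt : ∑ n ∈ Finset.range Mx, (α₁ n + α₂ n) * (1 - δ n) =
          (∑ n ∈ Finset.range m₁, α₁ n * (1 - δ n)) +
            ∑ n ∈ Finset.range m₂, α₂ n * (1 - δ n) := by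
        simp only [add_mul, Finset.sum_add_distrib]
        rw [e₁t, e₂t]
      rw [hns, hnt]
      have hsplit : (v₁ + v₂) - ((s₁ + s₂) • x +
          ((∑ n ∈ Finset.range m₁, α₁ n • w n) + ∑ n ∈ Finset.range m₂, α₂ n • w n)) =
          (v₁ - (s₁ • x + ∑ n ∈ Finset.range m₁, α₁ n • w n)) +
            (v₂ - (s₂ • x + ∑ n ∈ Finset.range m₂, α₂ n • w n)) := by
        rw [add_smul]; abel
      rw [hsplit]
      have := norm_add_le (v₁ - (s₁ • x + ∑ n ∈ Finset.range m₁, α₁ n • w n))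
        (v₂ - (s₂ • x + ∑ n ∈ Finset.range m₂, α₂ n • w n))
      nlinarith [this]
    have h2 : ∀ e₁ ∈ S v₁, q (v₁ + v₂) - e₁ ≤ q v₂ := fun e₁ he₁ =>
      le_csInf (hSne v₂) (fun e₂ he₂ => by linarith [key e₁ he₁ e₂ he₂])
    have h3 : q (v₁ + v₂) - q v₂ ≤ q v₁ :=
      le_csInf (hSne v₁) (fun e₁ he₁ => by linarith [h2 e₁ he₁])
    linarith
  -- positive homogeneity
  have hle : ∀ (c : ℝ), 0 < c → ∀ v, q (c • v) ≤ c * q v := by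
    intro c hc v
    have hstep : ∀ e ∈ S v, q (c • v) ≤ c * e := by
      rintro e ⟨m, α, s, hsupp, rfl⟩
      have hmem : ‖c • v - ((c * s) • x + ∑ n ∈ Finset.range m, (c * α n) • w n)‖ +
          ((∑ n ∈ Finset.range m, (c * α n) * (1 - δ n)) + (c * s) * t) ∈ S (c • v) :=
        ⟨m, fun n => c * α n, c * s, fun n hn => by show c * α n = 0; rw [hsupp n hn, mul_zero], rfl⟩
      refine (hq_le _ _ hmem).trans ?_
      have h1 : ∑ n ∈ Finset.range m, (c * α n) • w n =
          c • ∑ n ∈ Finset.range m, α n • w n := by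
        rw [Finset.smul_sum]
        exact Finset.sum_congr rfl (fun n _ => by rw [smul_smul])
      have h2 : ∑ n ∈ Finset.range m, (c * α n) * (1 - δ n) =
          c * ∑ n ∈ Finset.range m, α n * (1 - δ n) := by
        rw [Finset.mul_sum]
        exact Finset.sum_congr rfl (fun n _ => by ring)
      rw [h1, h2]
      have h3 : c • v - ((c * s) • x + c • ∑ n ∈ Finset.range m, α n • w n) =
          c • (v - (s • x + ∑ n ∈ Finset.range m, α n • w n)) := by
        rw [mul_smul, smul_sub, smul_add]
      rw [h3, norm_smul, Real.norm_eq_abs, abs_of_pos hc]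
      exact le_of_eq (by ring)
    have hdiv : q (c • v) / c ≤ q v :=
      le_csInf (hSne v) (fun e he => (div_le_iff₀ hc).mpr
        (le_of_le_of_eq (hstep e he) (mul_comm c e)))
    have := (div_le_iff₀ hc).mp hdiv
    linarith [this]
  have hq_smul : ∀ (c : ℝ), 0 < c → ∀ v, q (c • v) = c * q v := by
    intro c hc v
    refine le_antisymm (hle c hc v) ?_
    have h4 := hle c⁻¹ (by positivity) (c • v)
    rw [inv_smul_smul₀ hc.ne'] at h4
    have h5 := mul_le_mul_of_nonneg_left h4 hc.le
    rw [← mul_assoc, mul_inv_cancel₀ hc.ne', one_mul] at h5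
    exact h5
  -- Hahn-Banach
  obtain ⟨g, -, hg⟩ := exists_extension_of_le_sublinear ⟨⊥, 0⟩ q hq_smul hq_add
    (fun v => by
      have h0 : (v : X) = 0 := (Submodule.mem_bot ℝ).mp v.2
      have := hq_lb (0 : X)
      simp only [norm_zero, neg_zero] at this
      simpa [h0] using this)
  have habs : ∀ v, |g v| ≤ ‖v‖ := by
    intro v
    refine abs_le.mpr ⟨?_, (hg v).trans (hq_norm v)⟩
    have h1 : g (-v) ≤ ‖-v‖ := (hg (-v)).trans (hq_norm (-v))
    rw [map_neg, norm_neg] at h1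
    linarith
  refine ⟨g.mkContinuous 1 (fun v => by rw [Real.norm_eq_abs, one_mul]; exact habs v),
    LinearMap.mkContinuous_norm_le g zero_le_one _, fun n hn => ?_, ?_⟩
  · -- value on w n
    show g (w n) = 1 - δ n
    have hind : ∀ (c : ℝ), ∑ k ∈ Finset.range (n + 1), (if k = n then c else 0) • w k
        = c • w n := by
      intro c
      rw [Finset.sum_eq_single n (fun k _ hk => by rw [if_neg hk, zero_smul])
        (fun hn' => absurd (Finset.self_mem_range_succ n) hn')]
      rw [if_pos rfl]
    have hindt : ∀ (c : ℝ), ∑ k ∈ Finset.range (n + 1), (if k = n then c else 0) * (1 - δ k)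
        = c * (1 - δ n) := by
      intro c
      rw [Finset.sum_eq_single n (fun k _ hk => by rw [if_neg hk, zero_mul])
        (fun hn' => absurd (Finset.self_mem_range_succ n) hn')]
      rw [if_pos rfl]
    have hsupp : ∀ (c : ℝ) (k : ℕ), k < N ∨ n + 1 ≤ k → (if k = n then c else 0) = 0 := by
      rintro c k (hk | hk)
      · exact if_neg (fun h => by omega)
      · exact if_neg (by omega)
    have hup : q (w n) ≤ 1 - δ n := by
      refine hq_le _ _ ⟨n + 1, fun k => if k = n then (1:ℝ) else 0, 0, hsupp 1, ?_⟩
      rw [hind 1, hindt 1, one_smul, zero_smul, zero_add, sub_self, norm_zero, zero_mul]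
      ring
    have hdown : q (-(w n)) ≤ -(1 - δ n) := by
      refine hq_le _ _ ⟨n + 1, fun k => if k = n then (-1:ℝ) else 0, 0, hsupp (-1), ?_⟩
      rw [hind (-1), hindt (-1), neg_smul, one_smul, zero_smul, zero_add, zero_mul]
      have : -w n - -w n = 0 := by abel
      rw [this, norm_zero]
      ring
    have h1 : g (w n) ≤ 1 - δ n := (hg _).trans hup
    have h2 : g (-(w n)) ≤ -(1 - δ n) := (hg _).trans hdown
    rw [map_neg] at h2
    linarith
  · show g x = t
    have hup : q x ≤ t := by
      refine hq_le _ _ ⟨0, 0, 1, by simp, ?_⟩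
      simp
    have hdown : q (-x) ≤ -t := by
      refine hq_le _ _ ⟨0, 0, -1, by simp, ?_⟩
      simp
    have h1 : g x ≤ t := (hg _).trans hup
    have h2 : g (-x) ≤ -t := (hg _).trans hdown
    rw [map_neg] at h2
    linarith

set_option maxHeartbeats 1000000 in
private lemma key
    (P : StrongDual ℝ (StrongDual ℝ X) →L[ℝ]
        StrongDual ℝ (StrongDual ℝ X))
    (hL : ∀ z, ‖z‖ = ‖P z‖ + ‖z - P z‖)
    (u : ℕ → X) (hu : SpansL1Asy u)
    (ζ : StrongDual ℝ (StrongDual ℝ X))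
    (hζ : ∀ f : StrongDual ℝ X,
      Tendsto (fun n => f (‖u n‖⁻¹ • u n)) ↑(Filter.hyperfilter ℕ) (𝓝 (ζ f)))
    (x : X) (hx : NormedSpace.inclusionInDoubleDual ℝ X x = P ζ) : x = 0 := by
  classical
  obtain ⟨δ, hδ1, hδ2, hδ3⟩ := hu
  set w : ℕ → X := fun n => ‖u n‖⁻¹ • u n with hw
  have hwnorm : ∀ n, ‖w n‖ ≤ 1 := by
    intro n
    by_cases h : u n = 0
    · simp [hw, h]
    · have : ‖w n‖ = 1 := by
        rw [hw]
        simp only [norm_smul, norm_inv, norm_norm]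
        rw [inv_mul_cancel₀ (norm_ne_zero_iff.mpr h)]
      rw [this]
  have hζ1 : ‖ζ‖ ≤ 1 := by
    refine ContinuousLinearMap.opNorm_le_bound ζ zero_le_one (fun f => ?_)
    rw [one_mul]
    have ht : Tendsto (fun n => ‖f (w n)‖) ↑(Filter.hyperfilter ℕ) (𝓝 ‖ζ f‖) := (hζ f).norm
    refine le_of_tendsto ht (Filter.Eventually.of_forall (fun n => ?_))
    exact (f.le_opNorm (w n)).trans (mul_le_of_le_one_right (norm_nonneg f) (hwnorm n))
  have hxnorm : ‖P ζ‖ = ‖x‖ := by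
    rw [← hx]
    exact (NormedSpace.inclusionInDoubleDualLi ℝ (E := X)).norm_map x
  -- the forced value of norming functionals at x
  have forced : ∀ (N : ℕ) (f : StrongDual ℝ X), ‖f‖ ≤ 1 →
      (∀ n, N ≤ n → f (w n) = 1 - δ n) → f x = ‖x‖ := by
    intro N f hf1 hfw
    have hδU : Tendsto δ ↑(Filter.hyperfilter ℕ) (𝓝 0) :=
      hδ2.mono_left Nat.hyperfilter_le_atTop
    have hev : ∀ᶠ n in ↑(Filter.hyperfilter ℕ), (fun n => 1 - δ n) n = f (w n) :=
      ((eventually_ge_atTop N).filter_mono Nat.hyperfilter_le_atTop).mono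
        (fun n hn => (hfw n hn).symm)
    have h1 : Tendsto (fun n => f (w n)) ↑(Filter.hyperfilter ℕ) (𝓝 1) := by
      have h2 : Tendsto (fun n => 1 - δ n) ↑(Filter.hyperfilter ℕ) (𝓝 1) := by
        simpa using tendsto_const_nhds.sub hδU
      exact h2.congr' hev
    have hζf : ζ f = 1 := tendsto_nhds_unique (hζ f) h1
    have hPζf : (P ζ) f = f x := by rw [← hx]; rfl
    have hsub : (ζ - P ζ) f = 1 - f x := by
      rw [ContinuousLinearMap.sub_apply, hζf, hPζf]
    have habs : (ζ - P ζ) f ≤ ‖ζ - P ζ‖ := by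
      refine le_trans (le_abs_self _) ?_
      rw [← Real.norm_eq_abs]
      exact ((ζ - P ζ).le_opNorm f).trans
        (mul_le_of_le_one_right (norm_nonneg _) hf1)
    have hLζ := hL ζ
    have h3 : ‖x‖ ≤ f x := by
      have h4 : ‖ζ - P ζ‖ ≤ 1 - ‖x‖ := by rw [← hxnorm]; linarith
      linarith [hsub ▸ habs]
    have h5 : f x ≤ ‖x‖ := by
      refine le_trans (le_abs_self _) ?_
      rw [← Real.norm_eq_abs]
      exact (f.le_opNorm x).trans (mul_le_of_le_one_left (norm_nonneg x) hf1)
    linarith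
  -- pointwise bound used several times
  have hpt : ∀ (m : ℕ) (α : ℕ → ℝ),
      -(∑ n ∈ Finset.range m, α n * (1 - δ n)) ≤
        ∑ n ∈ Finset.range m, (1 - δ n) * |α n| := by
    intro m α
    rw [← Finset.sum_neg_distrib]
    refine Finset.sum_le_sum (fun n _ => ?_)
    have h1 : (0:ℝ) ≤ 1 - δ n := by linarith [(hδ1 n).2]
    have := mul_le_mul_of_nonneg_right (neg_abs_le (α n)) h1
    nlinarith [this]
  by_cases hBad : ∀ Nb : ℕ, ∃ m : ℕ, ∃ α : ℕ → ℝ, (∀ n, n < Nb ∨ m ≤ n → α n = 0) ∧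
      ‖x + ∑ n ∈ Finset.range m, α n • w n‖ +
        ∑ n ∈ Finset.range m, α n * (1 - δ n) < -(‖x‖ / 2)
  · -- impossible: two disjointly supported near-optimal combinations
    exfalso
    obtain ⟨m₁, α₁, hs₁, h₁⟩ := hBad 0
    obtain ⟨m₂, α₂, hs₂, h₂⟩ := hBad m₁
    set Mx := max m₁ m₂ with hMx
    have hA1 : ∀ n, m₁ ≤ n → α₁ n = 0 := fun n hn => hs₁ n (Or.inr hn)
    have hA2l : ∀ n, n < m₁ → α₂ n = 0 := fun n hn => hs₂ n (Or.inl hn)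
    have hA2 : ∀ n, m₂ ≤ n → α₂ n = 0 := fun n hn => hs₂ n (Or.inr hn)
    have e1 : ∑ n ∈ Finset.range Mx, (α₁ n - α₂ n) • w n =
        (∑ n ∈ Finset.range m₁, α₁ n • w n) - ∑ n ∈ Finset.range m₂, α₂ n • w n := by
      simp only [sub_smul, Finset.sum_sub_distrib]
      rw [sum_ext α₁ m₁ Mx (le_max_left _ _) hA1 (fun n a => a • w n) (by simp),
        sum_ext α₂ m₂ Mx (le_max_right _ _) hA2 (fun n a => a • w n) (by simp)]
    have habs' : ∀ n, |α₁ n - α₂ n| = |α₁ n| + |α₂ n| := by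
      intro n
      rcases lt_or_ge n m₁ with h | h
      · rw [hA2l n h]; simp
      · rw [hA1 n h]; simp
    have hlow := (hδ3 Mx (fun n => α₁ n - α₂ n)).1
    have he1 : ∑ n ∈ Finset.range Mx, (α₁ n - α₂ n) • (‖u n‖⁻¹ • u n) =
        ∑ n ∈ Finset.range Mx, (α₁ n - α₂ n) • w n := rfl
    rw [he1, e1] at hlow
    have hsplit : ∑ n ∈ Finset.range Mx, (1 - δ n) * |α₁ n - α₂ n| =
        (∑ n ∈ Finset.range m₁, (1 - δ n) * |α₁ n|) +
          ∑ n ∈ Finset.range m₂, (1 - δ n) * |α₂ n| := by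
      have : ∀ n, (1 - δ n) * |α₁ n - α₂ n| = (1 - δ n) * |α₁ n| + (1 - δ n) * |α₂ n| := by
        intro n; rw [habs' n]; ring
      rw [Finset.sum_congr rfl (fun n _ => this n), Finset.sum_add_distrib,
        sum_ext α₁ m₁ Mx (le_max_left _ _) hA1 (fun n a => (1 - δ n) * |a|) (by simp),
        sum_ext α₂ m₂ Mx (le_max_right _ _) hA2 (fun n a => (1 - δ n) * |a|) (by simp)]
    rw [hsplit] at hlow
    have htri : ‖(∑ n ∈ Finset.range m₁, α₁ n • w n) - ∑ n ∈ Finset.range m₂, α₂ n • w n‖ ≤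
        ‖x + ∑ n ∈ Finset.range m₁, α₁ n • w n‖ +
          ‖x + ∑ n ∈ Finset.range m₂, α₂ n • w n‖ := by
      have heq : (∑ n ∈ Finset.range m₁, α₁ n • w n) - ∑ n ∈ Finset.range m₂, α₂ n • w n =
          (x + ∑ n ∈ Finset.range m₁, α₁ n • w n) -
            (x + ∑ n ∈ Finset.range m₂, α₂ n • w n) := by abel
      rw [heq]
      exact norm_sub_le _ _
    have hp1 := hpt m₁ α₁
    have hp2 := hpt m₂ α₂
    have hxnn : (0:ℝ) ≤ ‖x‖ := norm_nonneg x
    linarith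
  · push_neg at hBad
    obtain ⟨N, hN⟩ := hBad
    -- build the functional f₀ (no constraint at x)
    have H0 : ∀ (m : ℕ) (α : ℕ → ℝ) (s : ℝ), (∀ n, n < N ∨ m ≤ n → α n = 0) →
        -‖s • (0:X) + ∑ n ∈ Finset.range m, α n • w n‖ ≤
          (∑ n ∈ Finset.range m, α n * (1 - δ n)) + s * 0 := by
      intro m α s hsupp
      have h1 := (hδ3 m α).1
      have h2 := hpt m α
      simp only [smul_zero, zero_add, mul_zero, add_zero]
      have he : ∑ n ∈ Finset.range m, α n • (‖u n‖⁻¹ • u n) =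
          ∑ n ∈ Finset.range m, α n • w n := rfl
      rw [he] at h1
      linarith
    obtain ⟨f₀, hf₀1, hf₀w, -⟩ := genHB w δ 0 0 N H0
    have hf₀x : f₀ x = ‖x‖ := forced N f₀ hf₀1 hf₀w
    have hf₀sum : ∀ (m : ℕ) (α : ℕ → ℝ), (∀ n, n < N ∨ m ≤ n → α n = 0) →
        f₀ (∑ n ∈ Finset.range m, α n • w n) =
          ∑ n ∈ Finset.range m, α n * (1 - δ n) := by
      intro m α hsupp
      rw [map_sum]
      refine Finset.sum_congr rfl (fun n hn => ?_)
      rw [map_smul]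
      rcases lt_or_ge n N with h | h
      · rw [hsupp n (Or.inl h)]; simp
      · rw [hf₀w n h, smul_eq_mul]
    -- the sublinear hypothesis for prescribing the value ‖x‖/2 at x
    have Hx : ∀ (m : ℕ) (α : ℕ → ℝ) (s : ℝ), (∀ n, n < N ∨ m ≤ n → α n = 0) →
        -‖s • x + ∑ n ∈ Finset.range m, α n • w n‖ ≤
          (∑ n ∈ Finset.range m, α n * (1 - δ n)) + s * (‖x‖ / 2) := by
      intro m α s hsupp
      rcases lt_trichotomy s 0 with hs | hs | hs
      · -- s < 0 : use f₀
        have hval : f₀ ((-s) • x - ∑ n ∈ Finset.range m, α n • w n) =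
            (-s) * ‖x‖ - ∑ n ∈ Finset.range m, α n * (1 - δ n) := by
          rw [map_sub, map_smul, hf₀x, hf₀sum m α hsupp, smul_eq_mul]
        have hb : f₀ ((-s) • x - ∑ n ∈ Finset.range m, α n • w n) ≤
            ‖(-s) • x - ∑ n ∈ Finset.range m, α n • w n‖ := by
          refine le_trans (le_abs_self _) ?_
          rw [← Real.norm_eq_abs]
          exact (f₀.le_opNorm _).trans (mul_le_of_le_one_left (norm_nonneg _) hf₀1)
        have hneg : ‖(-s) • x - ∑ n ∈ Finset.range m, α n • w n‖ =
            ‖s • x + ∑ n ∈ Finset.range m, α n • w n‖ := by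
          rw [← norm_neg]
          congr 1
          rw [neg_smul]
          abel
        rw [hval, hneg] at hb
        have hxnn : (0:ℝ) ≤ ‖x‖ := norm_nonneg x
        nlinarith
      · subst hs
        have := H0 m α 0 hsupp
        simpa using this
      · -- s > 0 : use the failure of Bad
        have hsupp' : ∀ n, n < N ∨ m ≤ n → α n / s = 0 := fun n hn => by
          rw [hsupp n hn, zero_div]
        have hq := hN m (fun n => α n / s) hsupp'
        have hsm : s • (x + ∑ n ∈ Finset.range m, (α n / s) • w n) =
            s • x + ∑ n ∈ Finset.range m, α n • w n := by
          rw [smul_add, Finset.smul_sum]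
          congr 1
          refine Finset.sum_congr rfl (fun n _ => ?_)
          rw [smul_smul, mul_div_cancel₀ _ hs.ne']
        have hnrm : ‖s • x + ∑ n ∈ Finset.range m, α n • w n‖ =
            s * ‖x + ∑ n ∈ Finset.range m, (α n / s) • w n‖ := by
          rw [← hsm, norm_smul, Real.norm_eq_abs, abs_of_pos hs]
        have hsum : ∑ n ∈ Finset.range m, (α n / s) * (1 - δ n) =
            (∑ n ∈ Finset.range m, α n * (1 - δ n)) / s := by
          rw [Finset.sum_div]
          exact Finset.sum_congr rfl (fun n _ => by ring)
        rw [hsum] at hq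
        rw [hnrm]
        have := mul_le_mul_of_nonneg_left hq hs.le
        rw [mul_add, mul_div_cancel₀ _ hs.ne'] at this
        nlinarith
    obtain ⟨f₁, hf₁1, hf₁w, hf₁x⟩ := genHB w δ x (‖x‖ / 2) N Hx
    have hforced := forced N f₁ hf₁1 hf₁w
    have hzero : ‖x‖ = 0 := by rw [hf₁x] at hforced; linarith
    exact norm_eq_zero.mp hzero

private lemma normalized_le_one (y : X) : ‖‖y‖⁻¹ • y‖ ≤ 1 := by
  by_cases h : y = 0
  · simp [h]
  · rw [norm_smul, norm_inv, norm_norm, inv_mul_cancel₀ (norm_ne_zero_iff.mpr h)]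


private lemma main_lem
    (P : StrongDual ℝ (StrongDual ℝ X) →L[ℝ]
        StrongDual ℝ (StrongDual ℝ X))
    (hidem : ∀ z, P (P z) = P z)
    (hL : ∀ z, ‖z‖ = ‖P z‖ + ‖z - P z‖)
    (hrange : Set.range ⇑P = Set.range ⇑(NormedSpace.inclusionInDoubleDual ℝ X))
    (c : ℕ → X) (a : X)
    (hgood : SpansL1Asy (fun n => c n - a) ∨ Tendsto (fun n => ‖c n - a‖) atTop (𝓝 0))
    (z : StrongDual ℝ (StrongDual ℝ X))
    (hz : ∀ f : StrongDual ℝ X,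
      Tendsto (fun n => f (c n)) ↑(Filter.hyperfilter ℕ) (𝓝 (z f)))
    (M : ℝ) (hM : ∀ n, ‖c n‖ ≤ M) :
    P z = NormedSpace.inclusionInDoubleDual ℝ X a := by
  classical
  set s : ℕ → X := fun n => c n - a with hs
  have hsb : ∀ n, |‖s n‖| ≤ M + ‖a‖ := by
    intro n
    rw [abs_of_nonneg (norm_nonneg _)]
    calc ‖s n‖ ≤ ‖c n‖ + ‖a‖ := norm_sub_le _ _
      _ ≤ M + ‖a‖ := by linarith [hM n]
  obtain ⟨r, -, hr⟩ := exists_rlim (fun n => ‖s n‖) (M + ‖a‖) hsb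
  have hrnn : 0 ≤ r := ge_of_tendsto hr (Filter.Eventually.of_forall fun n => norm_nonneg _)
  set w : ℕ → X := fun n => ‖s n‖⁻¹ • s n with hw
  obtain ⟨ζ, hζ⟩ := exists_dlim w 1 (fun n => normalized_le_one (s n))
  have hfact : ∀ (f : StrongDual ℝ X) (n : ℕ), f (s n) = ‖s n‖ * f (w n) := by
    intro f n
    by_cases h : s n = 0
    · rw [hw]
      simp [h]
    · have h2 : ‖s n‖ • w n = s n := by
        rw [hw]
        exact smul_inv_smul₀ (norm_ne_zero_iff.mpr h) (s n)
      conv_lhs => rw [← h2]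
      rw [map_smul, smul_eq_mul]
  have hslim : ∀ f : StrongDual ℝ X,
      Tendsto (fun n => f (s n)) ↑(Filter.hyperfilter ℕ) (𝓝 (z f - f a)) := by
    intro f
    have h1 := (hz f).sub_const (f a)
    refine h1.congr (fun n => ?_)
    rw [hs]
    simp
  have hprod : ∀ f : StrongDual ℝ X,
      Tendsto (fun n => f (s n)) ↑(Filter.hyperfilter ℕ) (𝓝 (r * ζ f)) := fun f =>
    (hr.mul (hζ f)).congr (fun n => (hfact f n).symm)
  have huniq : ∀ f : StrongDual ℝ X, z f - f a = r * ζ f := fun f =>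
    tendsto_nhds_unique (hslim f) (hprod f)
  have hPfix : P (NormedSpace.inclusionInDoubleDual ℝ X a) =
      NormedSpace.inclusionInDoubleDual ℝ X a := by
    have hmem : NormedSpace.inclusionInDoubleDual ℝ X a ∈ Set.range ⇑P := by
      rw [hrange]
      exact Set.mem_range_self a
    obtain ⟨v, hv⟩ := hmem
    rw [← hv, hidem, hv]
  rcases eq_or_lt_of_le hrnn with hr0 | hrpos
  · have hzeq : z = NormedSpace.inclusionInDoubleDual ℝ X a := by
      refine ContinuousLinearMap.ext (fun f => ?_)
      have h1 := huniq f
      rw [← hr0, zero_mul, sub_eq_zero] at h1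
      rw [h1, NormedSpace.dual_def]
    rw [hzeq, hPfix]
  · have hsp : SpansL1Asy s := by
      rcases hgood with h | h
      · exact h
      · exfalso
        have h2 : Tendsto (fun n => ‖s n‖) ↑(Filter.hyperfilter ℕ) (𝓝 0) :=
          h.mono_left Nat.hyperfilter_le_atTop
        exact absurd (tendsto_nhds_unique hr h2) (ne_of_gt hrpos)
    obtain ⟨xζ, hxζ⟩ : ∃ xζ, NormedSpace.inclusionInDoubleDual ℝ X xζ = P ζ := by
      have hmem : P ζ ∈ Set.range ⇑P := ⟨ζ, rfl⟩
      rw [hrange] at hmem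
      exact hmem
    have hx0 : xζ = 0 := key P hL s hsp ζ hζ xζ hxζ
    have hPζ : P ζ = 0 := by rw [← hxζ, hx0, map_zero]
    have hzeq : z = NormedSpace.inclusionInDoubleDual ℝ X a + r • ζ := by
      refine ContinuousLinearMap.ext (fun f => ?_)
      have h1 := huniq f
      rw [ContinuousLinearMap.add_apply, ContinuousLinearMap.smul_apply,
        NormedSpace.dual_def, smul_eq_mul]
      linarith
    rw [hzeq, map_add, map_smul, hPζ, smul_zero, add_zero, hPfix]


end AuxiliaryLemmas

/-- In an L-embedded space the limit in the definition of the convergence class C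
is unique: if both (xₙ - a) ∈ C₀ and (xₙ - b) ∈ C₀ then a = b. -/
theorem C0_limit_unique {X : Type*} [NormedAddCommGroup X] [NormedSpace ℝ X]
    [CompleteSpace X]
    (P : StrongDual ℝ (StrongDual ℝ X) →L[ℝ]
        StrongDual ℝ (StrongDual ℝ X))
    (hidem : ∀ z, P (P z) = P z)
    (hL : ∀ z, ‖z‖ = ‖P z‖ + ‖z - P z‖)
    (hrange : Set.range ⇑P = Set.range ⇑(NormedSpace.inclusionInDoubleDual ℝ X))
    (x : ℕ → X) (a b : X)
    (ha : InC0 (fun n => x n - a)) (hb : InC0 (fun n => x n - b)) :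
    a = b := by
  classical
  obtain ⟨⟨Ma, hMa⟩, ha2⟩ := ha
  obtain ⟨-, hb2⟩ := hb
  obtain ⟨ψ₁, hψ₁, hg1⟩ := ha2 id strictMono_id
  obtain ⟨ψ₂, hψ₂, hg2⟩ := hb2 ψ₁ hψ₁
  set σ : ℕ → ℕ := ψ₁ ∘ ψ₂ with hσ
  set c : ℕ → X := fun n => x (σ n) with hc
  have hbound : ∀ n, ‖c n‖ ≤ Ma + ‖a‖ := by
    intro n
    have h1 := hMa (σ n)
    have h2 : c n = (x (σ n) - a) + a := by rw [hc]; abel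
    rw [h2]
    calc ‖(x (σ n) - a) + a‖ ≤ ‖x (σ n) - a‖ + ‖a‖ := norm_add_le _ _
      _ ≤ Ma + ‖a‖ := by linarith
  obtain ⟨z, hz⟩ := exists_dlim c (Ma + ‖a‖) hbound
  have hga : SpansL1Asy (fun n => c n - a) ∨ Tendsto (fun n => ‖c n - a‖) atTop (𝓝 0) := by
    rcases hg1 with h | h
    · left
      have h2 := spansL1Asy_comp h hψ₂
      have h3 : (fun n => c n - a) = ((fun n => x n - a) ∘ id ∘ ψ₁) ∘ ψ₂ := by
        funext n
        simp [hc, hσ, Function.comp]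
      rw [h3]
      exact h2
    · right
      have h2 := h.comp hψ₂.tendsto_atTop
      refine h2.congr (fun n => ?_)
      simp [hc, hσ, Function.comp]
  have hgb : SpansL1Asy (fun n => c n - b) ∨ Tendsto (fun n => ‖c n - b‖) atTop (𝓝 0) := by
    rcases hg2 with h | h
    · left
      have h3 : (fun n => c n - b) = (fun n => x n - b) ∘ ψ₁ ∘ ψ₂ := by
        funext n
        simp [hc, hσ, Function.comp]
      rw [h3]
      exact h
    · right
      refine h.congr (fun n => ?_)
      simp [hc, hσ, Function.comp]
  have hPa := main_lem P hidem hL hrange c a hga z hz (Ma + ‖a‖) hbound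
  have hPb := main_lem P hidem hL hrange c b hgb z hz (Ma + ‖a‖) hbound
  have hab : NormedSpace.inclusionInDoubleDual ℝ X a =
      NormedSpace.inclusionInDoubleDual ℝ X b := hPa.symm.trans hPb
  refine (NormedSpace.eq_iff_forall_dual_eq ℝ).mpr (fun g => ?_)
  have := congrArg (fun T => T g) hab
  simpa [NormedSpace.dual_def] using this
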